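/- (Value difference decomposition.) In an infinite-horizon discounted MDP, for any function f : S×A → ℝ, any policy π, and any initial state-action distribution ν: E_ν[f] - E_ν[Q^π] = Σ_{t=1}^∞ γ^{t-1} E_{(s,a)∼d_{ν,t}^π, r∼R(s,a), s'∼P(s,a)}[f(s,a) - r - γ max_{a'} f(s',a')] when π = π_f is greedy w.r.t. f; more generally with f(s', π(s')) in place of max_{a'} f(s',a'). -/

import Mathlib

open Finset

/-- One step of the state-action distribution dynamics under policy `π`. -/
noncomputable def stepDist {S A : Type*} [Fintype S] [Fintype A] [DecidableEq A]
    (P : S → A → S → ℝ) (π : S → A) (ν : S → A → ℝ) : S → A → ℝ :=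
  fun s' a' => if a' = π s' then ∑ s, ∑ a, ν s a * P s a s' else 0

/-- Point mass at the state-action pair `(s0, a0)`. -/
noncomputable def pointMass {S A : Type*} [DecidableEq S] [DecidableEq A]
    (s0 : S) (a0 : A) : S → A → ℝ :=
  fun s a => if s = s0 ∧ a = a0 then 1 else 0

/-- `Qpi P Rbar γ π s0 a0` is Q^π(s0,a0): the expected discounted return starting
from `(s0, a0)` and following `π` thereafter. -/
noncomputable def Qpi {S A : Type*} [Fintype S] [Fintype A] [DecidableEq S] [DecidableEq A]
    (P : S → A → S → ℝ) (Rbar : S → A → ℝ) (γ : ℝ) (π : S → A) (s0 : S) (a0 : A) : ℝ :=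
  ∑' t : ℕ, γ ^ t *
    ∑ s, ∑ a, ((stepDist P π)^[t] (pointMass s0 a0)) s a * Rbar s a

section Aux
set_option linter.unusedSectionVars false
set_option linter.unusedVariables false
variable {S A : Type*} [Fintype S] [Fintype A] [DecidableEq S] [DecidableEq A]

lemma stepDist_def (P : S → A → S → ℝ) (π : S → A) (μ : S → A → ℝ) (s' : S) (a' : A) :
    stepDist P π μ s' a' = if a' = π s' then ∑ s, ∑ a, μ s a * P s a s' else 0 := rfl

lemma sum4_comm (F : S → A → S → A → ℝ) :
    ∑ s, ∑ a, ∑ s0, ∑ a0, F s a s0 a0 = ∑ s0, ∑ a0, ∑ s, ∑ a, F s a s0 a0 :=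
  calc ∑ s, ∑ a, ∑ s0, ∑ a0, F s a s0 a0
      = ∑ s, ∑ s0, ∑ a, ∑ a0, F s a s0 a0 :=
        Finset.sum_congr rfl fun s _ => Finset.sum_comm
    _ = ∑ s0, ∑ s, ∑ a, ∑ a0, F s a s0 a0 := Finset.sum_comm
    _ = ∑ s0, ∑ s, ∑ a0, ∑ a, F s a s0 a0 :=
        Finset.sum_congr rfl fun s0 _ => Finset.sum_congr rfl fun s _ => Finset.sum_comm
    _ = ∑ s0, ∑ a0, ∑ s, ∑ a, F s a s0 a0 :=
        Finset.sum_congr rfl fun s0 _ => Finset.sum_comm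

lemma exp_step (P : S → A → S → ℝ) (π : S → A) (μ : S → A → ℝ) (g : S → A → ℝ) :
    ∑ s', ∑ a', stepDist P π μ s' a' * g s' a'
      = ∑ s, ∑ a, μ s a * ∑ s', P s a s' * g s' (π s') := by
  have h1 : ∀ s' : S, ∑ a', stepDist P π μ s' a' * g s' a'
      = ∑ s, ∑ a, μ s a * (P s a s' * g s' (π s')) := by
    intro s'
    rw [Finset.sum_eq_single (π s')]
    · simp [stepDist, Finset.sum_mul, mul_assoc]
    · intro b _ hb; simp [stepDist, hb]
    · simp
  simp_rw [h1, Finset.mul_sum]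
  rw [Finset.sum_comm]
  refine Finset.sum_congr rfl fun s _ => ?_
  rw [Finset.sum_comm]

lemma iter_prob (P : S → A → S → ℝ)
    (hP : ∀ s a, (∀ s', 0 ≤ P s a s') ∧ ∑ s', P s a s' = 1)
    (π : S → A) (ν : S → A → ℝ) (hν : ∀ s a, 0 ≤ ν s a)
    (hν1 : ∑ s, ∑ a, ν s a = 1) (t : ℕ) :
    (∀ s a, 0 ≤ ((stepDist P π)^[t] ν) s a) ∧
      ∑ s, ∑ a, ((stepDist P π)^[t] ν) s a = 1 := by
  induction t with
  | zero => exact ⟨hν, hν1⟩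
  | succ t ih =>
    rw [Function.iterate_succ_apply']
    constructor
    · intro s a
      rw [stepDist_def]
      split
      · exact Finset.sum_nonneg fun s' _ => Finset.sum_nonneg fun a' _ =>
          mul_nonneg (ih.1 s' a') ((hP s' a').1 s)
      · exact le_refl 0
    · have h := exp_step P π ((stepDist P π)^[t] ν) (fun _ _ => 1)
      simp only [mul_one] at h
      rw [h]
      have h2 : ∀ s a, ∑ s' : S, P s a s' = 1 := fun s a => (hP s a).2
      simp_rw [h2, mul_one]
      exact ih.2

lemma iter_point (P : S → A → S → ℝ) (π : S → A) (ν : S → A → ℝ) (t : ℕ) (s : S) (a : A) :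
    ((stepDist P π)^[t] ν) s a
      = ∑ s0, ∑ a0, ν s0 a0 * ((stepDist P π)^[t] (pointMass s0 a0)) s a := by
  induction t generalizing s a with
  | zero =>
    simp only [Function.iterate_zero, id_eq, pointMass]
    simp [ite_and, mul_ite, Finset.sum_ite_eq]
  | succ t ih =>
    simp only [Function.iterate_succ_apply', stepDist_def]
    by_cases ha : a = π s
    · simp only [if_pos ha]
      calc ∑ s1, ∑ a1, ((stepDist P π)^[t] ν) s1 a1 * P s1 a1 s
          = ∑ s1, ∑ a1, ∑ s0, ∑ a0,
              ν s0 a0 * ((stepDist P π)^[t] (pointMass s0 a0)) s1 a1 * P s1 a1 s := by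
            refine Finset.sum_congr rfl fun s1 _ => Finset.sum_congr rfl fun a1 _ => ?_
            rw [ih s1 a1, Finset.sum_mul]
            refine Finset.sum_congr rfl fun s0 _ => ?_
            rw [Finset.sum_mul]
        _ = ∑ s0, ∑ a0, ∑ s1, ∑ a1,
              ν s0 a0 * ((stepDist P π)^[t] (pointMass s0 a0)) s1 a1 * P s1 a1 s :=
            sum4_comm _
        _ = ∑ s0, ∑ a0, ν s0 a0 *
              ∑ s1, ∑ a1, ((stepDist P π)^[t] (pointMass s0 a0)) s1 a1 * P s1 a1 s := by
            refine Finset.sum_congr rfl fun s0 _ => Finset.sum_congr rfl fun a0 _ => ?_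
            rw [Finset.mul_sum]
            refine Finset.sum_congr rfl fun s1 _ => ?_
            rw [Finset.mul_sum]
            exact Finset.sum_congr rfl fun a1 _ => by ring
    · simp [ha]

lemma exp_iter_point (P : S → A → S → ℝ) (π : S → A) (ν : S → A → ℝ)
    (g : S → A → ℝ) (t : ℕ) :
    ∑ s, ∑ a, ((stepDist P π)^[t] ν) s a * g s a
      = ∑ s0, ∑ a0, ν s0 a0 *
          ∑ s, ∑ a, ((stepDist P π)^[t] (pointMass s0 a0)) s a * g s a :=
  calc ∑ s, ∑ a, ((stepDist P π)^[t] ν) s a * g s a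
      = ∑ s, ∑ a, ∑ s0, ∑ a0,
          ν s0 a0 * ((stepDist P π)^[t] (pointMass s0 a0)) s a * g s a := by
        refine Finset.sum_congr rfl fun s _ => Finset.sum_congr rfl fun a _ => ?_
        rw [iter_point P π ν t s a, Finset.sum_mul]
        refine Finset.sum_congr rfl fun s0 _ => ?_
        rw [Finset.sum_mul]
    _ = ∑ s0, ∑ a0, ∑ s, ∑ a,
          ν s0 a0 * ((stepDist P π)^[t] (pointMass s0 a0)) s a * g s a := sum4_comm _
    _ = ∑ s0, ∑ a0, ν s0 a0 *
          ∑ s, ∑ a, ((stepDist P π)^[t] (pointMass s0 a0)) s a * g s a := by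
        refine Finset.sum_congr rfl fun s0 _ => Finset.sum_congr rfl fun a0 _ => ?_
        rw [Finset.mul_sum]
        refine Finset.sum_congr rfl fun s _ => ?_
        rw [Finset.mul_sum]
        exact Finset.sum_congr rfl fun a _ => by ring

lemma exp_bound (P : S → A → S → ℝ)
    (hP : ∀ s a, (∀ s', 0 ≤ P s a s') ∧ ∑ s', P s a s' = 1)
    (π : S → A) (ν : S → A → ℝ) (hν : ∀ s a, 0 ≤ ν s a)
    (hν1 : ∑ s, ∑ a, ν s a = 1) (g : S → A → ℝ) (t : ℕ) :
    |∑ s, ∑ a, ((stepDist P π)^[t] ν) s a * g s a| ≤ ∑ s, ∑ a, |g s a| := by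
  have hprob := iter_prob P hP π ν hν hν1 t
  have le1 : ∀ s a, ((stepDist P π)^[t] ν) s a ≤ 1 := by
    intro s a
    calc ((stepDist P π)^[t] ν) s a ≤ ∑ a', ((stepDist P π)^[t] ν) s a' :=
        Finset.single_le_sum (fun a' _ => hprob.1 s a') (mem_univ a)
    _ ≤ ∑ s', ∑ a', ((stepDist P π)^[t] ν) s' a' := Finset.single_le_sum
        (fun s' _ => Finset.sum_nonneg fun a' _ => hprob.1 s' a') (mem_univ s)
    _ = 1 := hprob.2
  calc |∑ s, ∑ a, ((stepDist P π)^[t] ν) s a * g s a|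
      ≤ ∑ s, |∑ a, ((stepDist P π)^[t] ν) s a * g s a| :=
        Finset.abs_sum_le_sum_abs _ _
    _ ≤ ∑ s, ∑ a, |((stepDist P π)^[t] ν) s a * g s a| :=
        Finset.sum_le_sum fun s _ => Finset.abs_sum_le_sum_abs _ _
    _ ≤ ∑ s, ∑ a, |g s a| := by
        refine Finset.sum_le_sum fun s _ => Finset.sum_le_sum fun a _ => ?_
        rw [abs_mul, abs_of_nonneg (hprob.1 s a)]
        calc ((stepDist P π)^[t] ν) s a * |g s a| ≤ 1 * |g s a| :=
            mul_le_mul_of_nonneg_right (le1 s a) (abs_nonneg _)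
        _ = |g s a| := one_mul _

lemma pointMass_prob (s0 : S) (a0 : A) :
    (∀ s a, (0:ℝ) ≤ pointMass s0 a0 s a) ∧ ∑ s, ∑ a, pointMass s0 a0 s a = (1:ℝ) := by
  constructor
  · intro s a; unfold pointMass; split <;> norm_num
  · simp [pointMass, ite_and, Finset.sum_ite_eq]

end Aux

set_option maxHeartbeats 1000000 in
/-- Value difference decomposition (Lemma 1 of Jiang et al. 2017), general form. -/
theorem stmt15 {S A : Type*} [Fintype S] [Fintype A] [DecidableEq S] [DecidableEq A]
    (P : S → A → S → ℝ)
    (hP : ∀ s a, (∀ s', 0 ≤ P s a s') ∧ ∑ s', P s a s' = 1)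
    (Rmax : ℝ) (Rbar : S → A → ℝ)
    (hR : ∀ s a, 0 ≤ Rbar s a ∧ Rbar s a ≤ Rmax)
    (γ : ℝ) (hγ0 : 0 ≤ γ) (hγ1 : γ < 1)
    (π : S → A) (f : S → A → ℝ)
    (ν : S → A → ℝ) (hν : ∀ s a, 0 ≤ ν s a) (hν1 : ∑ s, ∑ a, ν s a = 1) :
    (∑ s, ∑ a, ν s a * f s a) - (∑ s, ∑ a, ν s a * Qpi P Rbar γ π s a)
      = ∑' t : ℕ, γ ^ t *
          ∑ s, ∑ a, ((stepDist P π)^[t] ν) s a *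
            (f s a - Rbar s a - γ * ∑ s', P s a s' * f s' (π s')) := by
  classical
  have sumGeom : ∀ (a : ℕ → ℝ) (C : ℝ), (∀ t, |a t| ≤ C) →
      Summable (fun t => γ ^ t * a t) := by
    intro a C h
    refine Summable.of_norm_bounded
      ((summable_geometric_of_lt_one hγ0 hγ1).mul_right C) fun t => ?_
    rw [Real.norm_eq_abs, abs_mul, abs_of_nonneg (pow_nonneg hγ0 t)]
    exact mul_le_mul_of_nonneg_left (h t) (pow_nonneg hγ0 t)
  set Efn : ℕ → ℝ := fun t => ∑ s, ∑ a, ((stepDist P π)^[t] ν) s a * f s a with hEf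
  set ERn : ℕ → ℝ := fun t => ∑ s, ∑ a, ((stepDist P π)^[t] ν) s a * Rbar s a with hER
  have hEfb : ∀ t, |Efn t| ≤ ∑ s, ∑ a, |f s a| :=
    fun t => exp_bound P hP π ν hν hν1 f t
  have hERb : ∀ t, |ERn t| ≤ ∑ s, ∑ a, |Rbar s a| :=
    fun t => exp_bound P hP π ν hν hν1 Rbar t
  have sg : Summable (fun t => γ ^ t * Efn t) := sumGeom _ _ hEfb
  have sh : Summable (fun t => γ ^ t * ERn t) := sumGeom _ _ hERb
  have sg' : Summable (fun t => γ ^ (t + 1) * Efn (t + 1)) :=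
    (summable_nat_add_iff 1).mpr sg
  have stepEf : ∀ t, ∑ s, ∑ a, ((stepDist P π)^[t] ν) s a *
      ∑ s', P s a s' * f s' (π s') = Efn (t + 1) := by
    intro t
    rw [hEf]
    simp only [Function.iterate_succ_apply']
    rw [exp_step]
  have termEq : ∀ t : ℕ,
      γ ^ t * ∑ s, ∑ a, ((stepDist P π)^[t] ν) s a *
          (f s a - Rbar s a - γ * ∑ s', P s a s' * f s' (π s'))
        = γ ^ t * Efn t - γ ^ t * ERn t - γ ^ (t + 1) * Efn (t + 1) := by
    intro t
    have expand : ∑ s, ∑ a, ((stepDist P π)^[t] ν) s a *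
        (f s a - Rbar s a - γ * ∑ s', P s a s' * f s' (π s'))
        = Efn t - ERn t - γ * ∑ s, ∑ a, ((stepDist P π)^[t] ν) s a *
            ∑ s', P s a s' * f s' (π s') := by
      rw [hEf, hER]
      calc ∑ s, ∑ a, ((stepDist P π)^[t] ν) s a *
            (f s a - Rbar s a - γ * ∑ s', P s a s' * f s' (π s'))
          = ∑ s, ∑ a, (((stepDist P π)^[t] ν) s a * f s a
              - ((stepDist P π)^[t] ν) s a * Rbar s a
              - γ * (((stepDist P π)^[t] ν) s a * ∑ s', P s a s' * f s' (π s'))) :=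
            Finset.sum_congr rfl fun s _ => Finset.sum_congr rfl fun a _ => by ring
        _ = _ := by
            simp only [Finset.sum_sub_distrib, Finset.mul_sum]
    rw [expand, stepEf t]
    ring
  rw [tsum_congr termEq, Summable.tsum_sub (sg.sub sh) sg', Summable.tsum_sub sg sh]
  have tele : (∑' t, γ ^ t * Efn t) - (∑' t, γ ^ (t + 1) * Efn (t + 1)) = Efn 0 := by
    rw [Summable.tsum_eq_zero_add sg]
    simp
  have qeq : ∑ s, ∑ a, ν s a * Qpi P Rbar γ π s a = ∑' t, γ ^ t * ERn t := by
    unfold Qpi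
    have hsum : ∀ (s0 : S) (a0 : A),
        Summable (fun t : ℕ => ν s0 a0 * (γ ^ t *
          ∑ s, ∑ a, ((stepDist P π)^[t] (pointMass s0 a0)) s a * Rbar s a)) := by
      intro s0 a0
      refine Summable.mul_left _ ?_
      exact sumGeom _ (∑ s, ∑ a, |Rbar s a|) fun t =>
        exp_bound P hP π (pointMass s0 a0) (pointMass_prob s0 a0).1
          (pointMass_prob s0 a0).2 Rbar t
    calc ∑ s0, ∑ a0, ν s0 a0 * ∑' t : ℕ, γ ^ t *
          ∑ s, ∑ a, ((stepDist P π)^[t] (pointMass s0 a0)) s a * Rbar s a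
        = ∑ s0, ∑ a0, ∑' t : ℕ, ν s0 a0 * (γ ^ t *
          ∑ s, ∑ a, ((stepDist P π)^[t] (pointMass s0 a0)) s a * Rbar s a) :=
          Finset.sum_congr rfl fun s0 _ => Finset.sum_congr rfl fun a0 _ =>
            (tsum_mul_left).symm
      _ = ∑ s0, ∑' t : ℕ, ∑ a0, ν s0 a0 * (γ ^ t *
          ∑ s, ∑ a, ((stepDist P π)^[t] (pointMass s0 a0)) s a * Rbar s a) :=
          Finset.sum_congr rfl fun s0 _ => (Summable.tsum_finsetSum fun a0 _ => hsum s0 a0).symm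
      _ = ∑' t : ℕ, ∑ s0, ∑ a0, ν s0 a0 * (γ ^ t *
          ∑ s, ∑ a, ((stepDist P π)^[t] (pointMass s0 a0)) s a * Rbar s a) :=
          (Summable.tsum_finsetSum fun s0 _ => summable_sum fun a0 _ => hsum s0 a0).symm
      _ = ∑' t, γ ^ t * ERn t := by
          refine tsum_congr fun t => ?_
          rw [hER]
          simp only
          rw [exp_iter_point P π ν Rbar t, Finset.mul_sum]
          refine Finset.sum_congr rfl fun s0 _ => ?_
          rw [Finset.mul_sum]
          exact Finset.sum_congr rfl fun a0 _ => by ring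
  rw [qeq]
  have E0 : Efn 0 = ∑ s, ∑ a, ν s a * f s a := by rw [hEf]; simp
  linarith [tele, E0]
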